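/- Let q1 = ((((κ−1)/n)+1)^{1/2} − 1)/((((κ−1)/n)+1)^{1/2} + 1) and x* ∈ ℝ^d be the minimizer of F, whose ((i−1)p+j)-th coordinate equals q1^j, and set B = ‖x*‖₂. Let K_1,…,K_n be nonnegative integers with K = ∑_{i=1}^n K_i satisfying 2K ≤ np. Then for every x ∈ ℝ^d such that, for each i and each j > K_i, the coordinate x_{(i−1)p+j} = 0, it holds that F(x) − F(x*) ≥ (B²μ/4)·q1^{2K/n}. -/

import Mathlib

open Finset
open scoped RealInnerProductSpace

/-- The `p × p` tridiagonal matrix with diagonal entries `2` except the last one, which is `ξ`,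
and `-1` on the sub- and super-diagonal. -/
noncomputable def Tmat (p : ℕ) (ξ : ℝ) : Matrix (Fin p) (Fin p) ℝ :=
  fun j k =>
    if j = k then (if (j : ℕ) = p - 1 then ξ else 2)
    else if (j : ℕ) + 1 = (k : ℕ) ∨ (k : ℕ) + 1 = (j : ℕ) then -1 else 0

/-- The `d × d` matrix (`d = np`, coordinates indexed by `Fin n × Fin p`) which is zero outside
the `i`-th diagonal `p × p` block, and whose `i`-th diagonal block is `Tmat p ξ`. -/
noncomputable def Amat (n p : ℕ) (ξ : ℝ) (i : Fin n) :
    Matrix (Fin n × Fin p) (Fin n × Fin p) ℝ :=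
  fun a b => if a.1 = i ∧ b.1 = i then Tmat p ξ a.2 b.2 else 0

/-- The component function
`f_i(x) = ((L−μ)/4) ((1/2)⟨x, A_i x⟩ − ⟨e_{(i−1)p+1}, x⟩) + (μ/2)‖x‖²`. -/
noncomputable def fComp1 (n p : ℕ) [NeZero p] (L μ ξ : ℝ) (i : Fin n)
    (x : EuclideanSpace ℝ (Fin n × Fin p)) : ℝ :=
  ((L - μ) / 4) *
      ((1 / 2) * (∑ a : Fin n × Fin p, ∑ b : Fin n × Fin p, x a * Amat n p ξ i a b * x b)
        - x (i, 0)) +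
    (μ / 2) * ‖x‖ ^ 2


lemma tmat_symm (p : ℕ) (ξ : ℝ) (j k : Fin p) : Tmat p ξ j k = Tmat p ξ k j := by
  simp only [Tmat, Fin.ext_iff]
  split_ifs <;> first | rfl | (exfalso; omega)

lemma amat_symm (n p : ℕ) (ξ : ℝ) (i : Fin n) (a b : Fin n × Fin p) :
    Amat n p ξ i a b = Amat n p ξ i b a := by
  simp only [Amat]
  split_ifs with h1 h2 h3 <;> first | (exact tmat_symm ..) | rfl | tauto

noncomputable def Qf (n p : ℕ) (ξ : ℝ) (i : Fin n) (x y : Fin n × Fin p → ℝ) : ℝ :=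
  ∑ a : Fin n × Fin p, ∑ b : Fin n × Fin p, x a * Amat n p ξ i a b * y b

lemma Qf_symm (n p : ℕ) (ξ : ℝ) (i : Fin n) (x y : Fin n × Fin p → ℝ) :
    Qf n p ξ i x y = Qf n p ξ i y x := by
  simp only [Qf]
  rw [Finset.sum_comm]
  exact Finset.sum_congr rfl fun b _ => Finset.sum_congr rfl fun a _ => by
    rw [amat_symm]; ring

lemma Qf_expand (n p : ℕ) (ξ : ℝ) (i : Fin n) (u w : Fin n × Fin p → ℝ) (s : ℝ) :
    Qf n p ξ i (fun a => u a + s * w a) (fun a => u a + s * w a)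
      = Qf n p ξ i u u + 2 * s * Qf n p ξ i u w + s^2 * Qf n p ξ i w w := by
  have key : ∀ x y : Fin n × Fin p → ℝ,
      Qf n p ξ i (fun a => x a + y a) (fun a => x a + y a)
        = Qf n p ξ i x x + Qf n p ξ i x y + Qf n p ξ i y x + Qf n p ξ i y y := by
    intro x y
    simp only [Qf]
    rw [← Finset.sum_add_distrib, ← Finset.sum_add_distrib, ← Finset.sum_add_distrib]
    exact Finset.sum_congr rfl fun a _ => by
      rw [← Finset.sum_add_distrib, ← Finset.sum_add_distrib, ← Finset.sum_add_distrib]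
      exact Finset.sum_congr rfl fun b _ => by ring
  have hsc : ∀ x y : Fin n × Fin p → ℝ, ∀ t : ℝ,
      Qf n p ξ i x (fun a => t * y a) = t * Qf n p ξ i x y := by
    intro x y t
    simp only [Qf, Finset.mul_sum]
    exact Finset.sum_congr rfl fun a _ => Finset.sum_congr rfl fun b _ => by ring
  have hsc' : ∀ x y : Fin n × Fin p → ℝ, ∀ t : ℝ,
      Qf n p ξ i (fun a => t * x a) y = t * Qf n p ξ i x y := by
    intro x y t
    simp only [Qf, Finset.mul_sum]
    exact Finset.sum_congr rfl fun a _ => Finset.sum_congr rfl fun b _ => by ring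
  rw [key u (fun a => s * w a), hsc, hsc', hsc, hsc', Qf_symm n p ξ i w u]
  ring

noncomputable def TN (p : ℕ) (ξ : ℝ) (j k : ℕ) : ℝ :=
  if j = k then (if j = p - 1 then ξ else 2)
  else if j + 1 = k ∨ k + 1 = j then -1 else 0

lemma TN_key (m : ℕ) (ξ : ℝ) (hξ : 1 ≤ ξ) (W : ℕ → ℝ) :
    0 ≤ ∑ j ∈ range (m+1), ∑ k ∈ range (m+1), W j * TN (m+1) ξ j k * W k := by
  have hsplit : ∀ j ∈ range (m+1), ∀ k ∈ range (m+1),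
      W j * TN (m+1) ξ j k * W k =
        (if j = k then (if j = m then ξ else 2) * W j * W k else 0)
        + (if j + 1 = k then -(W j * W k) else 0)
        + (if k + 1 = j then -(W j * W k) else 0) := by
    intro j hj k hk
    simp only [TN]
    have h : m + 1 - 1 = m := rfl
    rw [h]
    split_ifs <;> first | ring1 | (exfalso; omega)
  rw [Finset.sum_congr rfl (fun j hj => Finset.sum_congr rfl (fun k hk => hsplit j hj k hk))]
  have h1 : ∀ j ∈ range (m+1),
      ∑ k ∈ range (m+1), ((if j = k then (if j = m then ξ else 2) * W j * W k else 0)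
        + (if j + 1 = k then -(W j * W k) else 0)
        + (if k + 1 = j then -(W j * W k) else 0))
      = (if j = m then ξ else 2) * W j * W j
        + (if j + 1 ≤ m then -(W j * W (j+1)) else 0)
        + (if 1 ≤ j then -(W j * W (j-1)) else 0) := by
    intro j hj
    rw [Finset.sum_add_distrib, Finset.sum_add_distrib]
    congr 1
    congr 1
    · rw [Finset.sum_ite_eq (range (m+1)) j (fun k => (if j = m then ξ else 2) * W j * W k)]
      simp only [hj, if_true]
    · rw [Finset.sum_ite_eq (range (m+1)) (j+1) (fun k => -(W j * W k))]
      simp only [Finset.mem_range]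
      split_ifs <;> first | rfl | (exfalso; omega)
    · rcases Nat.eq_zero_or_pos j with h0 | h0
      · subst h0
        rw [Finset.sum_eq_zero]
        · simp
        · intro k hk; simp
      · have hj1 : j - 1 ∈ range (m+1) := by simp at hj ⊢; omega
        rw [Finset.sum_eq_single (j-1)]
        · simp only [show j - 1 + 1 = j from by omega, if_true]
          split_ifs <;> first | rfl | (exfalso; omega)
        · intro k hk hne
          split_ifs with h
          · exfalso; omega
          · rfl
        · intro h; exact absurd hj1 h
  rw [Finset.sum_congr rfl h1]
  rw [Finset.sum_add_distrib, Finset.sum_add_distrib]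
  have hA : ∑ j ∈ range (m+1), (if j = m then ξ else 2) * W j * W j
      = 2 * (∑ j ∈ range m, W j * W j) + ξ * (W m * W m) := by
    rw [Finset.sum_range_succ, if_pos rfl, mul_assoc, Finset.mul_sum]
    congr 1
    exact Finset.sum_congr rfl (fun j hj => by
      rw [if_neg (by simp at hj; omega)]; ring)
  have hB : ∑ j ∈ range (m+1), (if j + 1 ≤ m then -(W j * W (j+1)) else 0)
      = -∑ j ∈ range m, W j * W (j+1) := by
    rw [Finset.sum_range_succ, if_neg (by omega), add_zero, ← Finset.sum_neg_distrib]
    exact Finset.sum_congr rfl (fun j hj => by rw [if_pos (by simp at hj; omega)])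
  have hC : ∑ j ∈ range (m+1), (if 1 ≤ j then -(W j * W (j-1)) else 0)
      = -∑ j ∈ range m, W j * W (j+1) := by
    rw [Finset.sum_range_succ', if_neg (by omega : ¬ (1:ℕ) ≤ 0), add_zero,
      ← Finset.sum_neg_distrib]
    exact Finset.sum_congr rfl (fun j hj => by
      rw [if_pos (by omega)]; simp only [Nat.add_sub_cancel]; ring)
  rw [hA, hB, hC]
  have hT2 : ∑ j ∈ range m, W (j+1) * W (j+1)
      = ∑ j ∈ range m, W j * W j + W m * W m - W 0 * W 0 := by
    have h1 := Finset.sum_range_succ (fun j => W j * W j) m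
    have h2 := Finset.sum_range_succ' (fun j => W j * W j) m
    linarith [h1.symm.trans h2]
  have hexp : ∑ j ∈ range m, (W j - W (j+1))^2
      = ∑ j ∈ range m, W j * W j - 2 * ∑ j ∈ range m, W j * W (j+1)
        + ∑ j ∈ range m, W (j+1) * W (j+1) := by
    rw [Finset.mul_sum, ← Finset.sum_sub_distrib, ← Finset.sum_add_distrib]
    exact Finset.sum_congr rfl (fun j _ => by ring)
  have hSOS : 0 ≤ ∑ j ∈ range m, (W j - W (j+1))^2 :=
    Finset.sum_nonneg (fun j _ => sq_nonneg _)
  nlinarith [mul_self_nonneg (W 0), mul_self_nonneg (W m)]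

lemma tmat_eq_TN (p : ℕ) (ξ : ℝ) (j k : Fin p) : Tmat p ξ j k = TN p ξ ↑j ↑k := by
  simp only [Tmat, TN, Fin.ext_iff]

lemma tmat_quad_nonneg (p : ℕ) (hp : p ≠ 0) (ξ : ℝ) (hξ : 1 ≤ ξ) (w : Fin p → ℝ) :
    0 ≤ ∑ j : Fin p, ∑ k : Fin p, w j * Tmat p ξ j k * w k := by
  obtain ⟨m, rfl⟩ := Nat.exists_eq_succ_of_ne_zero hp
  set W : ℕ → ℝ := fun j => if h : j < m + 1 then w ⟨j, h⟩ else 0 with hW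
  have hWj : ∀ j : Fin (m+1), W ↑j = w j := fun j => by
    simp only [hW]; rw [dif_pos j.isLt]
  have hconv : ∑ j : Fin (m+1), ∑ k : Fin (m+1), w j * Tmat (m+1) ξ j k * w k
      = ∑ j ∈ range (m+1), ∑ k ∈ range (m+1), W j * TN (m+1) ξ j k * W k := by
    rw [← Fin.sum_univ_eq_sum_range (fun j => ∑ k ∈ range (m+1), W j * TN (m+1) ξ j k * W k)]
    refine Finset.sum_congr rfl fun j _ => ?_
    rw [← Fin.sum_univ_eq_sum_range (fun k => W ↑j * TN (m+1) ξ ↑j k * W k)]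
    refine Finset.sum_congr rfl fun k _ => ?_
    rw [hWj, hWj, tmat_eq_TN]
  rw [hconv]
  exact TN_key m ξ hξ W

lemma Qf_block (n p : ℕ) (ξ : ℝ) (i : Fin n) (x y : Fin n × Fin p → ℝ) :
    Qf n p ξ i x y = ∑ j : Fin p, ∑ k : Fin p, x (i,j) * Tmat p ξ j k * y (i,k) := by
  simp only [Qf, Fintype.sum_prod_type]
  rw [Finset.sum_eq_single_of_mem i (Finset.mem_univ i)
    (fun b _ hb => by simp [Amat, hb])]
  refine Finset.sum_congr rfl fun j _ => ?_
  rw [Finset.sum_eq_single_of_mem i (Finset.mem_univ i)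
    (fun b _ hb => by simp [Amat, hb])]
  refine Finset.sum_congr rfl fun k _ => ?_
  simp [Amat]

lemma Qf_nonneg (n p : ℕ) (hp : p ≠ 0) (ξ : ℝ) (hξ : 1 ≤ ξ) (i : Fin n)
    (x : Fin n × Fin p → ℝ) : 0 ≤ Qf n p ξ i x x := by
  rw [Qf_block]
  exact tmat_quad_nonneg p hp ξ hξ (fun j => x (i,j))

noncomputable def Gfun (n p : ℕ) [NeZero p] (ξ c μ : ℝ) (z : Fin n × Fin p → ℝ) : ℝ :=
  (1/(n:ℝ)) * ∑ i : Fin n, (c * ((1/2) * Qf n p ξ i z z - z (i,0)))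
    + (μ/2) * ∑ a : Fin n × Fin p, (z a)^2

noncomputable def Dterm (n p : ℕ) [NeZero p] (ξ c μ : ℝ) (u w : Fin n × Fin p → ℝ) : ℝ :=
  (1/(n:ℝ)) * ∑ i : Fin n, (c * (Qf n p ξ i u w - w (i,0)))
    + μ * ∑ a : Fin n × Fin p, u a * w a

noncomputable def Rterm (n p : ℕ) (ξ c μ : ℝ) (w : Fin n × Fin p → ℝ) : ℝ :=
  (1/(n:ℝ)) * ∑ i : Fin n, (c * ((1/2) * Qf n p ξ i w w))
    + (μ/2) * ∑ a : Fin n × Fin p, (w a)^2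

lemma Gfun_expand (n p : ℕ) [NeZero p] (ξ c μ : ℝ) (u w : Fin n × Fin p → ℝ) (s : ℝ) :
    Gfun n p ξ c μ (fun a => u a + s * w a)
      = Gfun n p ξ c μ u + s * Dterm n p ξ c μ u w + s^2 * Rterm n p ξ c μ w := by
  simp only [Gfun, Dterm, Rterm]
  have h1 : ∑ i : Fin n, (c * ((1/2) * Qf n p ξ i (fun a => u a + s * w a)
        (fun a => u a + s * w a) - (u (i,0) + s * w (i,0))))
      = ∑ i : Fin n, (c * ((1/2) * Qf n p ξ i u u - u (i,0))
          + s * (c * (Qf n p ξ i u w - w (i,0)))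
          + s^2 * (c * ((1/2) * Qf n p ξ i w w))) := by
    refine Finset.sum_congr rfl fun i _ => ?_
    rw [Qf_expand]
    ring
  rw [h1, Finset.sum_add_distrib, Finset.sum_add_distrib]
  have h2 : ∑ a : Fin n × Fin p, (u a + s * w a)^2
      = ∑ a : Fin n × Fin p, ((u a)^2 + s * (2 * (u a * w a)) + s^2 * (w a)^2) := by
    exact Finset.sum_congr rfl fun a _ => by ring
  rw [h2, Finset.sum_add_distrib, Finset.sum_add_distrib]
  simp only [← Finset.mul_sum]
  ring

lemma Rterm_ge (n p : ℕ) (hp : p ≠ 0) (ξ c μ : ℝ) (hc : 0 ≤ c) (hn : 0 < (n:ℝ))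
    (hξ : 1 ≤ ξ) (w : Fin n × Fin p → ℝ) :
    (μ/2) * ∑ a : Fin n × Fin p, (w a)^2 ≤ Rterm n p ξ c μ w := by
  simp only [Rterm]
  have : 0 ≤ (1/(n:ℝ)) * ∑ i : Fin n, (c * ((1/2) * Qf n p ξ i w w)) := by
    apply mul_nonneg (by positivity)
    apply Finset.sum_nonneg fun i _ => ?_
    have := Qf_nonneg n p hp ξ hξ i w
    positivity
  linarith

set_option maxHeartbeats 2000000 in
/-- Case (1) function-value lower bound: under the support pattern produced by `K_i` queries
to `∇f_i` and `2K ≤ np`, `F(x) − F(x*) ≥ (B²μ/4) q1^{2K/n}` with `B = ‖x*‖`. -/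
theorem stmt11 (n p : ℕ) (hn : 2 ≤ n) [NeZero p] (hp : 1 ≤ p)
    (L μ κ ξ q1 : ℝ) (hμ : 0 < μ) (hLμ : μ < L) (hκ : κ = L / μ)
    (hξ : ξ = (Real.sqrt ((κ - 1) / n + 1) + 3) / (Real.sqrt ((κ - 1) / n + 1) + 1))
    (hq1 : q1 = (Real.sqrt ((κ - 1) / n + 1) - 1) / (Real.sqrt ((κ - 1) / n + 1) + 1))
    (F : EuclideanSpace ℝ (Fin n × Fin p) → ℝ)
    (hF : F = fun x => (1 / (n : ℝ)) * ∑ i : Fin n, fComp1 n p L μ ξ i x)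
    (xstar : EuclideanSpace ℝ (Fin n × Fin p))
    (hxstar : ∀ (i : Fin n) (j : Fin p), xstar (i, j) = q1 ^ ((j : ℕ) + 1))
    (hmin : ∀ y : EuclideanSpace ℝ (Fin n × Fin p), F xstar ≤ F y)
    (B : ℝ) (hB : B = ‖xstar‖)
    (K : Fin n → ℕ) (hK : 2 * ∑ i, K i ≤ n * p) :
    ∀ x : EuclideanSpace ℝ (Fin n × Fin p),
      (∀ (i : Fin n) (j : Fin p), K i < (j : ℕ) + 1 → x (i, j) = 0) →
      F x - F xstar ≥ (B ^ 2 * μ / 4) * q1 ^ ((2 * ((∑ i, K i : ℕ) : ℝ)) / n) := by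
  intro x hx
  -- basic positivity facts
  have hnpos : (0:ℝ) < n := by exact_mod_cast Nat.pos_of_ne_zero (by omega)
  have hn0 : (n:ℝ) ≠ 0 := ne_of_gt hnpos
  have hp0 : p ≠ 0 := by omega
  have hκ1 : 1 < κ := by rw [hκ]; exact (one_lt_div hμ).mpr hLμ
  have hfrac : 0 < (κ - 1) / (n:ℝ) := div_pos (by linarith) hnpos
  have hσ : 1 < Real.sqrt ((κ - 1) / n + 1) := by
    refine (Real.lt_sqrt (by norm_num)).mpr (by nlinarith [hfrac])
  set σ := Real.sqrt ((κ - 1) / n + 1) with hσdef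
  have hξ1 : 1 ≤ ξ := by
    rw [hξ]; rw [le_div_iff₀ (by linarith)]; linarith
  have hq1pos : 0 < q1 := by rw [hq1]; exact div_pos (by linarith) (by linarith)
  have hq1lt : q1 < 1 := by rw [hq1]; rw [div_lt_one (by linarith)]; linarith
  set r := q1 ^ 2 with hrdef
  have hrpos : 0 < r := by positivity
  have hrlt : r < 1 := by nlinarith
  have h1mr : (0:ℝ) < 1 - r := by linarith
  set c := (L - μ) / 4 with hcdef
  have hc : 0 ≤ c := by rw [hcdef]; linarith
  -- coordinate description of F
  have hFc : ∀ z : EuclideanSpace ℝ (Fin n × Fin p),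
      F z = Gfun n p ξ c μ (fun a => z a) := by
    intro z
    have hnorm : ‖z‖ ^ 2 = ∑ a : Fin n × Fin p, (z a) ^ 2 := by
      rw [EuclideanSpace.norm_eq, Real.sq_sqrt (Finset.sum_nonneg fun a _ => sq_nonneg _)]
      exact Finset.sum_congr rfl fun a _ => by rw [Real.norm_eq_abs, sq_abs]
    simp only [hF, fComp1, Gfun, Qf, hnorm, ← hcdef]
    rw [Finset.sum_add_distrib, Finset.sum_const, Finset.card_univ, Fintype.card_fin,
      nsmul_eq_mul, mul_add]
    have : (1:ℝ) / n * ((n:ℝ) * (μ / 2 * ∑ a : Fin n × Fin p, z a ^ 2))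
        = μ / 2 * ∑ a : Fin n × Fin p, z a ^ 2 := by
      field_simp
    rw [this]
  -- the direction v and the quadratic expansion of F along xstar + s v
  set v : Fin n × Fin p → ℝ := fun a => x a - xstar a with hvdef
  set u : Fin n × Fin p → ℝ := fun a => xstar a with hudef
  set D := Dterm n p ξ c μ u v with hDdef
  set R := Rterm n p ξ c μ v with hRdef
  have hFs : ∀ s : ℝ, F (xstar + s • (x - xstar)) = F xstar + s * D + s ^ 2 * R := by
    intro s
    rw [hFc (xstar + s • (x - xstar)), hFc xstar]
    have hco : (fun a => (xstar + s • (x - xstar)) a) = fun a => u a + s * v a := by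
      funext a
      simp only [PiLp.add_apply, PiLp.smul_apply, PiLp.sub_apply, smul_eq_mul, hudef, hvdef]
    rw [hco, Gfun_expand]
  have hs : ∀ s : ℝ, 0 ≤ s * D + s ^ 2 * R := by
    intro s
    have h1 := hmin (xstar + s • (x - xstar))
    rw [hFs s] at h1
    linarith
  have hRge : (μ / 2) * ∑ a : Fin n × Fin p, (v a) ^ 2 ≤ R :=
    Rterm_ge n p hp0 ξ c μ hc hnpos hξ1 v
  have hR0 : 0 ≤ R :=
    le_trans (mul_nonneg (by linarith) (Finset.sum_nonneg fun a _ => sq_nonneg _)) hRge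
  have hD0 : D = 0 := by
    set t := D / (2 * (R + 1)) with htdef
    have htD : t * (2 * (R + 1)) = D := by
      rw [htdef]; field_simp
    have h2 := hs (-t)
    have htD2 : t * D = t * (t * (2 * (R + 1))) := by rw [htD]
    have ht2 : t ^ 2 ≤ 0 := by nlinarith [sq_nonneg t]
    have ht0 : t = 0 := by
      have h3 : t ^ 2 = 0 := le_antisymm ht2 (sq_nonneg t)
      exact pow_eq_zero_iff (by norm_num) |>.mp h3
    rw [← htD, ht0, zero_mul]
  have hFxval : F x - F xstar = R := by
    have h1 := hFs 1
    have hxx : xstar + (1:ℝ) • (x - xstar) = x := by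
      rw [one_smul]; abel
    rw [hxx, hD0] at h1
    rw [h1]; ring
  -- lower bound the squared distance by the sum over killed coordinates
  have hvlb : ∑ i : Fin n, ∑ j ∈ Finset.range p, (if K i ≤ j then r ^ (j+1) else 0)
      ≤ ∑ a : Fin n × Fin p, (v a) ^ 2 := by
    have h1 : ∑ a : Fin n × Fin p,
        (if K a.1 ≤ (a.2:ℕ) then r ^ ((a.2:ℕ)+1) else 0) ≤ ∑ a : Fin n × Fin p, (v a) ^ 2 := by
      apply Finset.sum_le_sum
      rintro ⟨i, j⟩ _
      by_cases hij : K i ≤ (j:ℕ)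
      · rw [if_pos hij]
        have hxij : x (i, j) = 0 := hx i j (by omega)
        have : v (i, j) = - q1 ^ ((j:ℕ)+1) := by
          simp only [hvdef, hxij, hxstar i j]; ring
        have heq : (- q1 ^ ((j:ℕ)+1)) ^ 2 = r ^ ((j:ℕ)+1) := by rw [hrdef]; ring
        rw [this, heq]
      · rw [if_neg hij]
        exact sq_nonneg _
    calc ∑ i : Fin n, ∑ j ∈ Finset.range p, (if K i ≤ j then r ^ (j+1) else 0)
        = ∑ a : Fin n × Fin p, (if K a.1 ≤ (a.2:ℕ) then r ^ ((a.2:ℕ)+1) else 0) := by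
          rw [Fintype.sum_prod_type]
          exact Finset.sum_congr rfl fun i _ =>
            (Fin.sum_univ_eq_sum_range (fun j => if K i ≤ j then r ^ (j+1) else 0) p).symm
      _ ≤ _ := h1
  -- geometric sums
  have hgeom : ∀ M : ℕ, ∑ j ∈ Finset.range M, r ^ (j+1) = (r - r ^ (M+1)) / (1 - r) := by
    intro M
    induction M with
    | zero => simp
    | succ M ih =>
        rw [Finset.sum_range_succ, ih]
        field_simp
        ring
  have htail : ∀ i : Fin n, (r ^ (K i + 1) - r ^ (p+1)) / (1 - r)
      ≤ ∑ j ∈ Finset.range p, (if K i ≤ j then r ^ (j+1) else 0) := by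
    intro i
    have hsplit : ∑ j ∈ Finset.range p, (if K i ≤ j then r ^ (j+1) else 0)
        = ∑ j ∈ Finset.range p, r ^ (j+1)
          - ∑ j ∈ Finset.range p, (if j < K i then r ^ (j+1) else 0) := by
      rw [← Finset.sum_sub_distrib]
      refine Finset.sum_congr rfl fun j _ => ?_
      split_ifs with h1 h2 <;> first | (exfalso; omega) | ring
    have hhead : ∑ j ∈ Finset.range p, (if j < K i then r ^ (j+1) else 0)
        ≤ ∑ j ∈ Finset.range (K i), r ^ (j+1) := by
      rw [← Finset.sum_filter]
      apply Finset.sum_le_sum_of_subset_of_nonneg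
      · intro j hj; simp only [Finset.mem_filter, Finset.mem_range] at hj ⊢; omega
      · intro j _ _; positivity
    rw [hsplit, hgeom p]
    have := hgeom (K i)
    rw [this] at hhead
    have heq : (r ^ (K i + 1) - r ^ (p+1)) / (1 - r)
        = (r - r ^ (p+1)) / (1 - r) - (r - r ^ (K i + 1)) / (1 - r) := by
      field_simp
      ring
    rw [heq]
    linarith
  -- AM-GM / convexity step
  set T : ℝ := ((∑ i, K i : ℕ) : ℝ) / n with hTdef
  have hTnn : 0 ≤ T := by positivity
  set a := r ^ T with hadef
  have hapos : 0 < a := Real.rpow_pos_of_pos hrpos T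
  have hAM : (n:ℝ) * a ≤ ∑ i : Fin n, r ^ (K i) := by
    have hE : a = Real.exp (Real.log r * T) := by
      rw [hadef, Real.rpow_def_of_pos hrpos]
    have hkey : ∀ i : Fin n,
        Real.exp (Real.log r * T) * (1 + (Real.log r * (K i : ℝ) - Real.log r * T))
          ≤ r ^ (K i) := by
      intro i
      have h1 : (Real.log r * (K i : ℝ) - Real.log r * T) + 1
          ≤ Real.exp (Real.log r * (K i : ℝ) - Real.log r * T) :=
        Real.add_one_le_exp _
      have h2 : Real.exp (Real.log r * T)
            * Real.exp (Real.log r * (K i : ℝ) - Real.log r * T)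
          = r ^ (K i) := by
        rw [← Real.exp_add]
        rw [show Real.log r * T + (Real.log r * (K i:ℝ) - Real.log r * T)
          = Real.log r * (K i : ℝ) from by ring]
        rw [← Real.rpow_def_of_pos hrpos, Real.rpow_natCast]
      calc Real.exp (Real.log r * T) * (1 + (Real.log r * (K i : ℝ) - Real.log r * T))
          ≤ Real.exp (Real.log r * T)
            * Real.exp (Real.log r * (K i : ℝ) - Real.log r * T) := by
            apply mul_le_mul_of_nonneg_left _ (Real.exp_pos _).le
            linarith
        _ = r ^ (K i) := h2
    have hsum := Finset.sum_le_sum (fun i (_ : i ∈ Finset.univ) => hkey i)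
    have hcomp : ∑ i : Fin n,
        Real.exp (Real.log r * T) * (1 + (Real.log r * (K i : ℝ) - Real.log r * T))
        = (n:ℝ) * a := by
      rw [← Finset.mul_sum]
      have : ∑ i : Fin n, (1 + (Real.log r * (K i : ℝ) - Real.log r * T))
          = (n:ℝ) + (Real.log r * ((∑ i, K i : ℕ) : ℝ) - (n:ℝ) * (Real.log r * T)) := by
        rw [Finset.sum_add_distrib, Finset.sum_const, Finset.card_univ, Fintype.card_fin,
          nsmul_eq_mul, mul_one, Finset.sum_sub_distrib, ← Finset.mul_sum,
          Finset.sum_const, Finset.card_univ, Fintype.card_fin, nsmul_eq_mul]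
        rw [← Nat.cast_sum]
      rw [this]
      have hnT : (n:ℝ) * T = ((∑ i, K i : ℕ) : ℝ) := by
        rw [hTdef]; field_simp
      rw [hE]
      rw [show (n:ℝ) + (Real.log r * ((∑ i, K i : ℕ) : ℝ) - (n:ℝ) * (Real.log r * T))
        = (n:ℝ) + Real.log r * (((∑ i, K i : ℕ) : ℝ) - (n:ℝ) * T) from by ring]
      rw [← hnT]
      ring_nf
    rw [← hcomp]
    exact hsum
  -- key scalar inequality:  r*a + r^(p+1)*a - 2*r^(p+1) ≥ 0
  have hT2 : T ≤ (p:ℝ) / 2 := by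
    rw [hTdef, div_le_div_iff₀ hnpos two_pos]
    exact_mod_cast (by linarith [hK] : (∑ i, K i) * 2 ≤ p * n)
  have hkeysc : 0 ≤ r * a + r ^ (p+1) * a - 2 * r ^ (p+1) := by
    set cc := r ^ ((p:ℝ) / 2) with hccdef
    have hccpos : 0 < cc := Real.rpow_pos_of_pos hrpos _
    have hcca : cc ≤ a :=
      Real.rpow_le_rpow_of_exponent_ge hrpos hrlt.le hT2
    have hcc2 : cc * cc = r ^ (p:ℕ) := by
      rw [hccdef, ← Real.rpow_add hrpos]
      rw [show (p:ℝ)/2 + (p:ℝ)/2 = (p:ℝ) from by ring, Real.rpow_natCast]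
    have hrp : r ^ (p+1) = r ^ (p:ℕ) * r := by rw [pow_succ]
    rw [hrp, ← hcc2]
    nlinarith [mul_nonneg hccpos.le (sq_nonneg (1 - cc)), sq_nonneg (cc - a), hccpos.le,
      mul_nonneg (mul_nonneg hrpos.le hccpos.le) (sub_nonneg.mpr hcca)]
  -- value of B^2
  have hB2 : B ^ 2 = (n:ℝ) * ((r - r ^ (p+1)) / (1 - r)) := by
    rw [hB]
    have hnorm : ‖xstar‖ ^ 2 = ∑ a : Fin n × Fin p, (xstar a) ^ 2 := by
      rw [EuclideanSpace.norm_eq, Real.sq_sqrt (Finset.sum_nonneg fun a _ => sq_nonneg _)]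
      exact Finset.sum_congr rfl fun a _ => by rw [Real.norm_eq_abs, sq_abs]
    rw [hnorm, Fintype.sum_prod_type]
    have : ∀ i : Fin n, ∑ j : Fin p, (xstar (i, j)) ^ 2
        = (r - r ^ (p+1)) / (1 - r) := by
      intro i
      rw [← hgeom p]
      rw [← Fin.sum_univ_eq_sum_range (fun j => r ^ (j+1)) p]
      refine Finset.sum_congr rfl fun j _ => ?_
      rw [hxstar i j, hrdef]
      ring
    rw [Finset.sum_congr rfl fun i _ => this i, Finset.sum_const, Finset.card_univ,
      Fintype.card_fin, nsmul_eq_mul]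
  -- the rpow on the RHS
  have hq2T : q1 ^ ((2 * ((∑ i, K i : ℕ) : ℝ)) / n) = a := by
    rw [hadef, hrdef, ← Real.rpow_natCast q1 2, ← Real.rpow_mul hq1pos.le]
    congr 1
    rw [hTdef]
    push_cast
    ring
  -- assemble
  rw [ge_iff_le, hq2T, hB2, hFxval]
  have hstep1 : ∑ i : Fin n, (r ^ (K i + 1) - r ^ (p+1)) / (1 - r)
      ≤ ∑ i : Fin n, ∑ j ∈ Finset.range p, (if K i ≤ j then r ^ (j+1) else 0) :=
    Finset.sum_le_sum fun i _ => htail i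
  have hstep2 : ((n:ℝ) * (r * a) - (n:ℝ) * r ^ (p+1)) / (1 - r)
      ≤ ∑ i : Fin n, (r ^ (K i + 1) - r ^ (p+1)) / (1 - r) := by
    rw [← Finset.sum_div]
    have hsub : ∑ i : Fin n, (r ^ (K i + 1) - r ^ (p+1))
        = (∑ i : Fin n, r ^ (K i)) * r - (n:ℝ) * r ^ (p+1) := by
      rw [Finset.sum_sub_distrib, Finset.sum_const, Finset.card_univ, Fintype.card_fin,
        nsmul_eq_mul]
      congr 1
      rw [Finset.sum_mul]
      exact Finset.sum_congr rfl fun i _ => pow_succ r (K i)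
    rw [hsub]
    apply (div_le_div_iff_of_pos_right h1mr).mpr
    have := mul_le_mul_of_nonneg_right hAM hrpos.le
    linarith
  have hfinal : (n:ℝ) * ((r - r ^ (p+1)) / (1 - r)) * μ / 4 * a
      ≤ μ / 2 * (((n:ℝ) * (r * a) - (n:ℝ) * r ^ (p+1)) / (1 - r)) := by
    rw [show (n:ℝ) * ((r - r ^ (p+1)) / (1 - r)) * μ / 4 * a
        = ((n:ℝ) * (r - r ^ (p+1)) * μ * a / 4) / (1 - r) from by ring,
      show μ / 2 * (((n:ℝ) * (r * a) - (n:ℝ) * r ^ (p+1)) / (1 - r))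
        = (μ * ((n:ℝ) * (r * a) - (n:ℝ) * r ^ (p+1)) / 2) / (1 - r) from by ring]
    apply (div_le_div_iff_of_pos_right h1mr).mpr
    nlinarith [mul_nonneg (mul_nonneg hμ.le hnpos.le) hkeysc]
  calc (n:ℝ) * ((r - r ^ (p+1)) / (1 - r)) * μ / 4 * a
      ≤ μ / 2 * (((n:ℝ) * (r * a) - (n:ℝ) * r ^ (p+1)) / (1 - r)) := hfinal
    _ ≤ μ / 2 * (∑ i : Fin n, (r ^ (K i + 1) - r ^ (p+1)) / (1 - r)) :=
        mul_le_mul_of_nonneg_left hstep2 (by linarith)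
    _ ≤ μ / 2 * (∑ i : Fin n, ∑ j ∈ Finset.range p, (if K i ≤ j then r ^ (j+1) else 0)) :=
        mul_le_mul_of_nonneg_left hstep1 (by linarith)
    _ ≤ μ / 2 * (∑ a : Fin n × Fin p, (v a) ^ 2) :=
        mul_le_mul_of_nonneg_left hvlb (by linarith)
    _ ≤ R := hRge
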